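/- Let E be an evolutionary system satisfying A1, and let A ⊆ X satisfy ω_w(A) ⊆ A. Then ω_s(A) = ω_w(A). In particular ω_s(X) = ω_w(X) = A_w, and if the strong global attractor A_s exists, then A_s = A_w. -/

import Mathlib

open Set Filter Topology

/-- The topology induced by a metric structure `m` on `X`. -/
def mtop {X : Type*} (m : MetricSpace X) : TopologicalSpace X :=
  m.toPseudoMetricSpace.toUniformSpace.toTopologicalSpace

/-- An evolutionary system: for each `T : ℝ`, `E T` is the set of trajectories on `[T, ∞)`
(modeled as functions `ℝ → X`), with translation and restriction properties. -/
structure EvolSys (X : Type*) where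
  E : ℝ → Set (ℝ → X)
  nonempty : (E 0).Nonempty
  translate : ∀ T s : ℝ, E (T + s) = {u | (fun t => u (t + s)) ∈ E T}
  restrict : ∀ T T' : ℝ, T ≤ T' → E T ⊆ E T'

/-- Complete trajectories. -/
def EvolSys.Einf {X : Type*} (ES : EvolSys X) : Set (ℝ → X) := {u | ∀ T : ℝ, u ∈ ES.E T}

/-- `R t A = {u t : u 0 ∈ A, u ∈ E([0,∞))}`. -/
def EvolSys.R {X : Type*} (ES : EvolSys X) (t : ℝ) (A : Set X) : Set X :=
  {x | ∃ u ∈ ES.E 0, u 0 ∈ A ∧ u t = x}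

/-- `R̃ t A = {u t : u 0 ∈ A, u ∈ E((-∞,∞))}`. -/
def EvolSys.Rt {X : Type*} (ES : EvolSys X) (t : ℝ) (A : Set X) : Set X :=
  {x | ∃ u ∈ ES.Einf, u 0 ∈ A ∧ u t = x}

/-- The omega-limit of `A` with respect to the metric `m`. -/
def omegaLim {X : Type*} (m : MetricSpace X) (ES : EvolSys X) (A : Set X) : Set X :=
  ⋂ T ∈ Ici (0:ℝ), @closure X (mtop m) (⋃ t ∈ Ici T, ES.R t A)

/-- `P` uniformly attracts `A` in the metric `m`. -/
def attracts {X : Type*} (m : MetricSpace X) (ES : EvolSys X) (P A : Set X) : Prop :=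
  ∀ ε > (0:ℝ), ∃ t₀ : ℝ, ∀ t ≥ t₀, ∀ x ∈ ES.R t A, ∃ p ∈ P, m.dist x p < ε

/-- `P` is an attracting set in the metric `m`. -/
def isAttracting {X : Type*} (m : MetricSpace X) (ES : EvolSys X) (P : Set X) : Prop :=
  attracts m ES P univ

/-- A global attractor in metric `m`: a minimal closed attracting set. -/
def isGlobalAttractor {X : Type*} (m : MetricSpace X) (ES : EvolSys X) (A : Set X) : Prop :=
  @IsClosed X (mtop m) A ∧ isAttracting m ES A ∧
    ∀ B ⊆ A, @IsClosed X (mtop m) B → isAttracting m ES B → B = A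

/-- Asymptotic compactness with respect to the strong metric `ms`. -/
def asympCompact {X : Type*} (ms : MetricSpace X) (ES : EvolSys X) : Prop :=
  ∀ (t : ℕ → ℝ) (x : ℕ → X), Tendsto t atTop atTop →
    (∀ n, x n ∈ ES.R (t n) univ) →
    ∃ (φ : ℕ → ℕ) (y : X), StrictMono φ ∧
      Tendsto (fun n => ms.dist (x (φ n)) y) atTop (𝓝 0)

/-- Quasi-invariance of `A`: through every point of `A` passes a complete trajectory
lying in `A`. -/
def quasiInvariant {X : Type*} (ES : EvolSys X) (A : Set X) : Prop :=
  ∀ a ∈ A, ∃ u ∈ ES.Einf, u 0 = a ∧ ∀ t : ℝ, u t ∈ A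

/-- Condition A1: `E([0,∞))` is (sequentially) compact in `C([0,∞); X_w)`, i.e. every
sequence of trajectories has a subsequence converging, uniformly in `d_w` on every
compact subinterval of `[0,∞)`, to a trajectory. -/
def A1cond {X : Type*} (mw : MetricSpace X) (ES : EvolSys X) : Prop :=
  ∀ u : ℕ → ℝ → X, (∀ n, u n ∈ ES.E 0) →
    ∃ (φ : ℕ → ℕ) (v : ℝ → X), StrictMono φ ∧ v ∈ ES.E 0 ∧
      ∀ T > (0:ℝ), ∀ ε > (0:ℝ), ∃ N : ℕ, ∀ n ≥ N, ∀ s ∈ Icc (0:ℝ) T,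
        mw.dist (u (φ n) s) (v s) < ε

/-- The metric of `C([a,∞); X_w)`. -/
noncomputable def dC {X : Type*} (mw : MetricSpace X) (a : ℝ) (u v : ℝ → X) : ℝ :=
  ∑' T : ℕ, (1/2 : ℝ)^T *
    (sSup ((fun t => mw.dist (u t) (v t)) '' Icc a (a + T)) /
     (1 + sSup ((fun t => mw.dist (u t) (v t)) '' Icc a (a + T))))

section Helpers

variable {X : Type*}

lemma mclosure_iff (m : MetricSpace X) (S : Set X) (y : X) :
    y ∈ @closure X (mtop m) S ↔ ∀ ε > 0, ∃ z ∈ S, m.dist y z < ε := by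
  letI := m
  exact Metric.mem_closure_iff

lemma mdist_triangle (m : MetricSpace X) (a b c : X) :
    m.dist a c ≤ m.dist a b + m.dist b c := by
  letI := m; exact dist_triangle a b c

lemma mdist_comm (m : MetricSpace X) (a b : X) : m.dist a b = m.dist b a := by
  letI := m; exact dist_comm a b

lemma mdist_self (m : MetricSpace X) (a : X) : m.dist a a = 0 := by
  letI := m; exact dist_self a

lemma mdist_nonneg (m : MetricSpace X) (a b : X) : 0 ≤ m.dist a b := by
  letI := m; exact dist_nonneg

lemma mdist_eq_zero (m : MetricSpace X) (a b : X) : m.dist a b = 0 ↔ a = b := by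
  letI := m; exact dist_eq_zero

lemma msubset_closure (m : MetricSpace X) (S : Set X) : S ⊆ @closure X (mtop m) S := by
  letI := m; exact subset_closure

lemma misClosed_inter (m : MetricSpace X) {s t : Set X} (hs : @IsClosed X (mtop m) s)
    (ht : @IsClosed X (mtop m) t) : @IsClosed X (mtop m) (s ∩ t) := by
  letI := m; exact IsClosed.inter hs ht

lemma mclosure_eq (m : MetricSpace X) {s : Set X} (h : @IsClosed X (mtop m) s) :
    @closure X (mtop m) s = s := by
  letI := m; exact h.closure_eq

lemma mclosed_ge (m : MetricSpace X) (a : X) (r : ℝ) :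
    @IsClosed X (mtop m) {y | r ≤ m.dist a y} := by
  letI := m
  exact isClosed_le continuous_const (Continuous.dist continuous_const continuous_id)

/-- the strong closure is contained in the weak closure -/
lemma closure_sub_closure (ms mw : MetricSpace X)
    (hsw : ∀ u v : ℕ → X,
      Tendsto (fun n => ms.dist (u n) (v n)) atTop (𝓝 0) →
      Tendsto (fun n => mw.dist (u n) (v n)) atTop (𝓝 0))
    (S : Set X) : @closure X (mtop ms) S ⊆ @closure X (mtop mw) S := by
  intro y hy
  rw [mclosure_iff] at hy ⊢
  have H : ∀ n : ℕ, ∃ z ∈ S, ms.dist y z < 1 / (n + 1) := fun n => hy _ (by positivity)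
  choose z hzS hz using H
  have h1 : Tendsto (fun n : ℕ => ms.dist ((fun _ => y) n) (z n)) atTop (𝓝 0) := by
    apply squeeze_zero (fun n => mdist_nonneg ms _ _) (fun n => (hz n).le)
    exact tendsto_one_div_add_atTop_nhds_zero_nat
  have h2 := hsw _ _ h1
  intro ε hε
  obtain ⟨n, hn⟩ := (h2.eventually (gt_mem_nhds hε)).exists
  exact ⟨z n, hzS n, hn⟩

/-- Key lemma: under A1, if `ω_w(A) ⊆ A` then `ω_s(A) = ω_w(A)`. -/
lemma omega_eq (ms mw : MetricSpace X) (ES : EvolSys X)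
    (hsw : ∀ u v : ℕ → X,
      Tendsto (fun n => ms.dist (u n) (v n)) atTop (𝓝 0) →
      Tendsto (fun n => mw.dist (u n) (v n)) atTop (𝓝 0))
    (hA1 : A1cond mw ES)
    (A : Set X) (hAsub : omegaLim mw ES A ⊆ A) :
    omegaLim ms ES A = omegaLim mw ES A := by
  apply Subset.antisymm
  · exact iInter₂_mono fun T _ => closure_sub_closure ms mw hsw _
  · intro x hx
    -- Every point of the weak omega limit is in `R s A` for every `s ≥ 0`.
    have key : ∀ s : ℝ, 0 ≤ s → x ∈ ES.R s A := by
      intro s hs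
      have hx' : ∀ T : ℝ, 0 ≤ T →
          x ∈ @closure X (mtop mw) (⋃ t ∈ Ici T, ES.R t A) :=
        fun T hT => mem_iInter₂.1 hx T hT
      have H : ∀ n : ℕ, ∃ t : ℝ, ∃ u : ℝ → X, u ∈ ES.E 0 ∧ u 0 ∈ A ∧
          (n : ℝ) + s ≤ t ∧ mw.dist x (u t) < 1 / (n + 1) := by
        intro n
        have h1 := hx' ((n : ℝ) + s) (by have : (0:ℝ) ≤ (n:ℝ) := Nat.cast_nonneg n; linarith)
        rw [mclosure_iff] at h1
        obtain ⟨zz, hzU, hzd⟩ := h1 (1 / (n + 1)) (by positivity)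
        simp only [mem_iUnion, mem_Ici] at hzU
        obtain ⟨t, ht, u, hu, hu0, hut⟩ := hzU
        exact ⟨t, u, hu, hu0, ht, by rw [hut]; exact hzd⟩
      choose t u huE hu0 hts hdist using H
      -- shifted trajectories
      set w : ℕ → ℝ → X := fun n τ => u n (τ + (t n - s)) with hwdef
      have hwE : ∀ n, w n ∈ ES.E 0 := by
        intro n
        have hle : (0 : ℝ) + (s - t n) ≤ 0 := by
          have := hts n; have : (0:ℝ) ≤ (n:ℝ) := Nat.cast_nonneg n; linarith
        refine ES.restrict _ 0 hle ?_
        rw [ES.translate 0 (s - t n)]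
        have heq : (fun τ => w n (τ + (s - t n))) = u n := by
          funext τ
          show u n (τ + (s - t n) + (t n - s)) = u n τ
          congr 1; ring
        show (fun τ => w n (τ + (s - t n))) ∈ ES.E 0
        rw [heq]; exact huE n
      obtain ⟨φ, v, hφ, hvE, hconv⟩ := hA1 w hwE
      -- pointwise convergence of the subsequence at a point `σ ≥ 0`
      have hpt : ∀ σ : ℝ, 0 ≤ σ → ∀ ε > (0:ℝ), ∃ N : ℕ, ∀ n ≥ N,
          mw.dist (w (φ n) σ) (v σ) < ε := by
        intro σ hσ ε hε
        obtain ⟨N, hN⟩ := hconv (σ + 1) (by linarith) ε hε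
        exact ⟨N, fun n hn => hN n hn σ ⟨hσ, by linarith⟩⟩
      have hws : ∀ k, w k s = u k (t k) := by
        intro k
        show u k (s + (t k - s)) = u k (t k)
        congr 1; ring
      -- v s = x
      have hvs : v s = x := by
        have hlt : ∀ ε > (0:ℝ), mw.dist x (v s) < ε := by
          intro ε hε
          obtain ⟨N, hN⟩ := hpt s hs (ε / 2) (half_pos hε)
          obtain ⟨n₀, hn₀⟩ := exists_nat_one_div_lt (half_pos hε)
          set n := max n₀ N with hn
          have h1 : mw.dist (w (φ n) s) (v s) < ε / 2 := hN n (le_max_right _ _)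
          have h2 : mw.dist x (w (φ n) s) < ε / 2 := by
            rw [hws (φ n)]
            refine lt_of_lt_of_le (hdist (φ n)) (le_trans ?_ hn₀.le)
            have hmono : (n₀ : ℝ) ≤ (φ n : ℝ) := by
              exact_mod_cast le_trans (le_max_left n₀ N) hφ.le_apply
            apply one_div_le_one_div_of_le (by positivity)
            linarith
          calc mw.dist x (v s) ≤ mw.dist x (w (φ n) s) + mw.dist (w (φ n) s) (v s) :=
                mdist_triangle mw _ _ _
            _ < ε / 2 + ε / 2 := by linarith
            _ = ε := by ring
        have h0 : mw.dist x (v s) = 0 := by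
          by_contra h
          have hp : 0 < mw.dist x (v s) := lt_of_le_of_ne (mdist_nonneg mw _ _) (Ne.symm h)
          exact lt_irrefl _ (hlt _ hp)
        exact ((mdist_eq_zero mw x (v s)).1 h0).symm
      -- v 0 ∈ ω_w(A)
      have hv0 : v 0 ∈ omegaLim mw ES A := by
        refine mem_iInter₂.2 fun T hT => ?_
        rw [mclosure_iff]
        intro ε hε
        obtain ⟨N, hN⟩ := hpt 0 le_rfl ε hε
        set n := max N ⌈T⌉₊ with hn
        have hTn : T ≤ (n : ℝ) :=
          le_trans (Nat.le_ceil T) (by exact_mod_cast le_max_right N ⌈T⌉₊)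
        have hnφ : (n : ℝ) ≤ (φ n : ℝ) := by exact_mod_cast hφ.le_apply
        refine ⟨w (φ n) 0, ?_, ?_⟩
        · have hmem : w (φ n) 0 ∈ ES.R (t (φ n) - s) A := by
            refine ⟨u (φ n), huE _, hu0 _, ?_⟩
            show u (φ n) (t (φ n) - s) = u (φ n) (0 + (t (φ n) - s))
            congr 1; ring
          refine mem_biUnion (mem_Ici.2 ?_) hmem
          have := hts (φ n); linarith
        · rw [mdist_comm]
          exact hN n (le_max_left _ _)
      exact ⟨v, hvE, hAsub hv0, hvs⟩
    refine mem_iInter₂.2 fun T hT => ?_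
    exact msubset_closure ms _ (mem_biUnion self_mem_Ici (key T hT))

end Helpers

theorem stmt14 {X : Type*} (ms mw : MetricSpace X) (ES : EvolSys X)
    (hXw : @IsCompact X (mtop mw) Set.univ)
    (hsw : ∀ u v : ℕ → X,
      Tendsto (fun n => ms.dist (u n) (v n)) atTop (𝓝 0) →
      Tendsto (fun n => mw.dist (u n) (v n)) atTop (𝓝 0))
    (hA1 : A1cond mw ES)
    (A : Set X) (hAsub : omegaLim mw ES A ⊆ A) :
    omegaLim ms ES A = omegaLim mw ES A ∧
    omegaLim ms ES Set.univ = omegaLim mw ES Set.univ ∧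
    ∀ As : Set X, isGlobalAttractor ms ES As → As = omegaLim mw ES Set.univ := by
  have h1 := omega_eq ms mw ES hsw hA1 A hAsub
  have h2 := omega_eq ms mw ES hsw hA1 Set.univ (subset_univ _)
  refine ⟨h1, h2, ?_⟩
  rintro As ⟨hcl, hat, hmin⟩
  have hEq : As = omegaLim ms ES Set.univ := by
    apply Subset.antisymm
    · -- As ⊆ ω_s(X)
      intro a ha
      refine mem_iInter₂.2 fun T hT => ?_
      by_contra hnc
      rw [mclosure_iff] at hnc
      push_neg at hnc
      obtain ⟨δ, hδ, hrd⟩ := hnc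
      set r := δ / 2 with hrdef
      have hr : 0 < r := half_pos hδ
      set B := As ∩ {y | r ≤ ms.dist a y} with hBdef
      have hBcl : @IsClosed X (mtop ms) B := misClosed_inter ms hcl (mclosed_ge ms a r)
      have hBat : isAttracting ms ES B := by
        intro ε hε
        obtain ⟨t₀, ht₀⟩ := hat (min ε r) (lt_min hε hr)
        refine ⟨max t₀ T, fun τ hτ y hy => ?_⟩
        obtain ⟨p, hp, hdp⟩ := ht₀ τ (le_trans (le_max_left _ _) hτ) y hy
        have hyU : y ∈ ⋃ t ∈ Ici T, ES.R t Set.univ :=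
          mem_biUnion (mem_Ici.2 (le_trans (le_max_right _ _) hτ)) hy
        have h2r : δ ≤ ms.dist a y := hrd y hyU
        have hd1 : ms.dist a y ≤ ms.dist a p + ms.dist p y := mdist_triangle ms _ _ _
        have hd2 : ms.dist p y = ms.dist y p := mdist_comm ms _ _
        have hdr : ms.dist y p < r := lt_of_lt_of_le hdp (min_le_right ε r)
        have hpB : r ≤ ms.dist a p := by rw [hrdef] at hdr ⊢; linarith
        exact ⟨p, ⟨hp, hpB⟩, lt_of_lt_of_le hdp (min_le_left ε r)⟩
      have hBA := hmin B inter_subset_left hBcl hBat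
      have haB : a ∈ B := hBA ▸ ha
      have hfin : r ≤ ms.dist a a := haB.2
      rw [mdist_self ms a] at hfin
      linarith
    · -- ω_s(X) ⊆ As
      intro x hx
      have hclos : x ∈ @closure X (mtop ms) As := by
        rw [mclosure_iff]
        intro ε hε
        obtain ⟨t₀, ht₀⟩ := hat (ε / 2) (half_pos hε)
        have hx' := mem_iInter₂.1 hx (max t₀ 0) (mem_Ici.2 (le_max_right _ _))
        rw [mclosure_iff] at hx'
        obtain ⟨z, hzU, hzd⟩ := hx' (ε / 2) (half_pos hε)
        simp only [mem_iUnion, mem_Ici] at hzU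
        obtain ⟨τ, hτ, hzR⟩ := hzU
        obtain ⟨p, hp, hdp⟩ := ht₀ τ (le_trans (le_max_left _ _) hτ) z hzR
        exact ⟨p, hp, lt_of_le_of_lt (mdist_triangle ms x z p) (by linarith)⟩
      rw [mclosure_eq ms hcl] at hclos
      exact hclos
  rw [hEq]
  exact h2
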